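/- Let (Γ, I) be an independence alphabet such that either (a) every vertex of (Γ, I) has degree at most 1, or (b) (Γ, I) has exactly one nontrivial connected component and that component is complete bipartite. Then the trace monoid M(Γ, I) embeds into {a,b}* × {c,d}*. -/

import Mathlib

/-- The congruence on the free monoid generated by `ab = ba` for independent `(a,b)`. -/
def traceCon {Γ : Type} (I : Γ → Γ → Prop) : Con (FreeMonoid Γ) :=
  conGen fun u v => ∃ a b : Γ, I a b ∧
    u = FreeMonoid.of a * FreeMonoid.of b ∧ v = FreeMonoid.of b * FreeMonoid.of a

/-- The trace monoid of the independence alphabet `(Γ, I)`. -/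
abbrev TraceMonoid {Γ : Type} (I : Γ → Γ → Prop) := (traceCon I).Quotient

/-- `(Γ, I)` has exactly one nontrivial connected component and it is complete
bipartite: the edge set is exactly `C₁ × C₂ ∪ C₂ × C₁` for disjoint nonempty sets
`C₁, C₂`. -/
def OneCompleteBipartiteComponent {Γ : Type} (I : Γ → Γ → Prop) : Prop :=
  ∃ C₁ C₂ : Set Γ, Disjoint C₁ C₂ ∧ C₁.Nonempty ∧ C₂.Nonempty ∧
    ∀ a b : Γ, I a b ↔ ((a ∈ C₁ ∧ b ∈ C₂) ∨ (a ∈ C₂ ∧ b ∈ C₁))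

open scoped Classical

section TraceLemmas

variable {Γ : Type} {I : Γ → Γ → Prop}

lemma traceCon_of {a b : Γ} (h : I a b) :
    traceCon I (FreeMonoid.of a * FreeMonoid.of b) (FreeMonoid.of b * FreeMonoid.of a) :=
  ConGen.Rel.of _ _ ⟨a, b, h, rfl, rfl⟩

-- ofList is mul-compatible
lemma ofList_append (u v : List Γ) :
    FreeMonoid.ofList (u ++ v) = FreeMonoid.ofList u * FreeMonoid.ofList v := rfl

lemma ofList_cons (a : Γ) (u : List Γ) :
    FreeMonoid.ofList (a :: u) = FreeMonoid.of a * FreeMonoid.ofList u := rfl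

-- move a letter left across a list it commutes with
lemma trace_move {a : Γ} : ∀ (p : List Γ), (∀ x ∈ p, I x a) →
    traceCon I (FreeMonoid.ofList (p ++ [a])) (FreeMonoid.ofList (a :: p)) := by
  intro p
  induction p with
  | nil => intro _; exact (traceCon I).refl _
  | cons x p ih =>
    intro h
    have h1 : traceCon I (FreeMonoid.ofList (p ++ [a])) (FreeMonoid.ofList (a :: p)) :=
      ih fun y hy => h y (List.mem_cons_of_mem _ hy)
    have h2 : traceCon I (FreeMonoid.of x * FreeMonoid.ofList (p ++ [a]))
        (FreeMonoid.of x * FreeMonoid.ofList (a :: p)) := (traceCon I).mul ((traceCon I).refl _) h1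
    have h3 : traceCon I (FreeMonoid.of x * (FreeMonoid.of a * FreeMonoid.ofList p))
        (FreeMonoid.of a * (FreeMonoid.of x * FreeMonoid.ofList p)) := by
      have := (traceCon I).mul (traceCon_of (h x (List.mem_cons_self)))
        ((traceCon I).refl (FreeMonoid.ofList p))
      simpa [mul_assoc] using this
    exact (traceCon I).trans (h2 : _) h3

end TraceLemmas

section Code

lemma repl_cancel {α : Type*} (x : α) : ∀ (a b : ℕ) (r₁ r₂ : List α),
    r₁.head? ≠ some x → r₂.head? ≠ some x →
    List.replicate a x ++ r₁ = List.replicate b x ++ r₂ → a = b ∧ r₁ = r₂ := by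
  intro a
  induction a with
  | zero =>
    intro b r₁ r₂ h1 h2 h
    cases b with
    | zero => simpa using h
    | succ b =>
      exfalso
      simp only [List.replicate_succ, List.nil_append, List.cons_append] at h
      have : r₁ = x :: (List.replicate b x ++ r₂) := by simpa using h
      exact h1 (by rw [this]; rfl)
  | succ a ih =>
    intro b r₁ r₂ h1 h2 h
    cases b with
    | zero =>
      exfalso
      simp only [List.replicate_succ, List.nil_append, List.cons_append] at h
      have : r₂ = x :: (List.replicate a x ++ r₁) := by simpa using h.symm
      exact h2 (by rw [this]; rfl)
    | succ b =>
      simp only [List.replicate_succ, List.cons_append, List.cons.injEq] at h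
      obtain ⟨he, hr⟩ := ih b r₁ r₂ h1 h2 h.2
      exact ⟨by omega, hr⟩

def codeN (n : ℕ) : List Bool := true :: List.replicate n false

lemma code_head (l : List ℕ) : (l.flatMap codeN).head? ≠ some false := by
  cases l with
  | nil => simp
  | cons a l => simp [codeN]

lemma code_inj : ∀ (l₁ l₂ : List ℕ), l₁.flatMap codeN = l₂.flatMap codeN → l₁ = l₂ := by
  intro l₁
  induction l₁ with
  | nil =>
    intro l₂ h
    cases l₂ with
    | nil => rfl
    | cons b l₂ => simp [codeN] at h
  | cons a l₁ ih =>
    intro l₂ h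
    cases l₂ with
    | nil => simp [codeN] at h
    | cons b l₂ =>
      simp only [List.flatMap_cons, codeN, List.cons_append, List.cons.injEq] at h
      obtain ⟨hab, hr⟩ := repl_cancel false a b _ _ (code_head l₁) (code_head l₂) h.2
      exact by rw [hab, ih l₂ hr]

end Code

section Assemble

variable {Γ : Type} {I : Γ → Γ → Prop}

lemma lift_flatMap {β : Type} (f : Γ → List β) : ∀ (w : List Γ),
    (FreeMonoid.lift (fun a => FreeMonoid.ofList (f a))) (FreeMonoid.ofList w)
      = FreeMonoid.ofList (w.flatMap f) := by
  intro w
  induction w with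
  | nil => simp [FreeMonoid.ofList]; rfl
  | cons a w ih =>
    have : FreeMonoid.ofList (a :: w) = FreeMonoid.of a * FreeMonoid.ofList w := rfl
    rw [this, map_mul, ih, FreeMonoid.lift_eval_of]
    rfl

lemma lift_pair_flatMap (U V : Γ → List Bool) (w : List Γ) :
    (FreeMonoid.lift (fun a => ((FreeMonoid.ofList (U a), FreeMonoid.ofList (V a)) :
        FreeMonoid Bool × FreeMonoid Bool))) (FreeMonoid.ofList w)
      = (FreeMonoid.ofList (w.flatMap U), FreeMonoid.ofList (w.flatMap V)) := by
  induction w with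
  | nil => simp [FreeMonoid.ofList]; rfl
  | cons a w ih =>
    have h : FreeMonoid.ofList (a :: w) = FreeMonoid.of a * FreeMonoid.ofList w := rfl
    rw [h, map_mul, ih, FreeMonoid.lift_eval_of]
    rfl

lemma assemble (S T : Γ → List ℕ)
    (hresp : ∀ a b : Γ, I a b →
      S a ++ S b = S b ++ S a ∧ T a ++ T b = T b ++ T a)
    (hinj : ∀ u v : List Γ, u.flatMap S = v.flatMap S → u.flatMap T = v.flatMap T →
      traceCon I (FreeMonoid.ofList u) (FreeMonoid.ofList v)) :
    ∃ f : TraceMonoid I →* FreeMonoid Bool × FreeMonoid Bool, Function.Injective f := by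
  classical
  set U : Γ → List Bool := fun a => (S a).flatMap codeN with hU
  set V : Γ → List Bool := fun a => (T a).flatMap codeN with hV
  set G : FreeMonoid Γ →* FreeMonoid Bool × FreeMonoid Bool :=
    FreeMonoid.lift (fun a => (FreeMonoid.ofList (U a), FreeMonoid.ofList (V a))) with hG
  have hGw : ∀ w : List Γ, G (FreeMonoid.ofList w)
      = (FreeMonoid.ofList ((w.flatMap S).flatMap codeN),
         FreeMonoid.ofList ((w.flatMap T).flatMap codeN)) := by
    intro w
    rw [hG, lift_pair_flatMap]
    congr 1 <;> rw [List.flatMap_assoc]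
  have hle : traceCon I ≤ Con.ker G := by
    apply Con.conGen_le.mpr
    rintro x y ⟨a, b, hab, rfl, rfl⟩
    have h1 : FreeMonoid.of a * FreeMonoid.of b = FreeMonoid.ofList [a, b] := rfl
    have h2 : FreeMonoid.of b * FreeMonoid.of a = FreeMonoid.ofList [b, a] := rfl
    show G _ = G _
    rw [h1, h2, hGw, hGw]
    obtain ⟨e1, e2⟩ := hresp a b hab
    simp only [List.flatMap_cons, List.flatMap_nil, List.append_nil]
    rw [e1, e2]
  refine ⟨(traceCon I).lift G hle, ?_⟩
  intro x y hxy
  induction x using Con.induction_on with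
  | H x =>
  induction y using Con.induction_on with
  | H y =>
  rw [Con.lift_coe, Con.lift_coe] at hxy
  rw [Con.eq]
  have hx : x = FreeMonoid.ofList (FreeMonoid.toList x) := rfl
  have hy : y = FreeMonoid.ofList (FreeMonoid.toList y) := rfl
  rw [hx, hy] at hxy ⊢
  rw [hGw, hGw, Prod.mk.injEq] at hxy
  obtain ⟨e1, e2⟩ := hxy
  apply hinj
  · exact code_inj _ _ (FreeMonoid.ofList.injective e1)
  · exact code_inj _ _ (FreeMonoid.ofList.injective e2)

end Assemble

section Matching

variable {Γ : Type}

noncomputable def ptr (I : Γ → Γ → Prop) (a : Γ) : Γ :=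
  if h : ∃ b, I a b then h.choose else a

section Matching

variable {I : Γ → Γ → Prop} {e : Γ → ℕ}

lemma I_ptr {a : Γ} (h : ∃ b, I a b) : I a (ptr I a) := by
  rw [ptr, dif_pos h]; exact h.choose_spec

lemma ptr_unpaired {a : Γ} (h : ¬ ∃ b, I a b) : ptr I a = a := dif_neg h

lemma ptr_eq (hdeg : ∀ a b c : Γ, I a b → I a c → b = c) {a b : Γ} (h : I a b) :
    ptr I a = b := hdeg a _ b (I_ptr ⟨b, h⟩) h

lemma ptr_ptr (hsym : ∀ a b, I a b → I b a) (hdeg : ∀ a b c : Γ, I a b → I a c → b = c)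
    (a : Γ) : ptr I (ptr I a) = a := by
  by_cases h : ∃ b, I a b
  · exact ptr_eq hdeg (hsym _ _ (I_ptr h))
  · rw [ptr_unpaired h, ptr_unpaired h]

lemma ptr_or (a : Γ) : a = ptr I a ∨ I a (ptr I a) := by
  by_cases h : ∃ b, I a b
  · exact Or.inr (I_ptr h)
  · exact Or.inl (ptr_unpaired h).symm

noncomputable def lab (I : Γ → Γ → Prop) (e : Γ → ℕ) (a : Γ) : ℕ :=
  min (e a) (e (ptr I a))

noncomputable def sexp (I : Γ → Γ → Prop) (e : Γ → ℕ) (a : Γ) : ℕ :=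
  if e a ≤ e (ptr I a) then 1 else 2

noncomputable def texp (I : Γ → Γ → Prop) (e : Γ → ℕ) (a : Γ) : ℕ :=
  if e a ≤ e (ptr I a) then 2 else 1

lemma lab_ptr (hsym : ∀ a b, I a b → I b a) (hdeg : ∀ a b c : Γ, I a b → I a c → b = c)
    (a : Γ) : lab I e (ptr I a) = lab I e a := by
  rw [lab, lab, ptr_ptr hsym hdeg, min_comm]

lemma lab_eq (hsym : ∀ a b, I a b → I b a) (hdeg : ∀ a b c : Γ, I a b → I a c → b = c)
    (einj : Function.Injective e) {a x : Γ} (h : lab I e x = lab I e a) :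
    x = a ∨ x = ptr I a := by
  have hx := min_choice (e x) (e (ptr I x))
  have ha := min_choice (e a) (e (ptr I a))
  rw [lab, lab] at h
  rcases hx with hx | hx <;> rcases ha with ha | ha <;> rw [hx, ha] at h <;>
    have := einj h
  · exact Or.inl this
  · exact Or.inr this
  · -- ptr x = a
    right
    rw [← this, ptr_ptr hsym hdeg]
  · -- ptr x = ptr a
    left
    have := congrArg (ptr I) this
    rwa [ptr_ptr hsym hdeg, ptr_ptr hsym hdeg] at this

lemma exp_cases (hirr : ∀ a, ¬ I a a) (hsym : ∀ a b, I a b → I b a)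
    (hdeg : ∀ a b c : Γ, I a b → I a c → b = c) (einj : Function.Injective e) (a : Γ) :
    (sexp I e a = 1 ∧ texp I e a = 2 ∧ sexp I e (ptr I a) = 2 ∧ texp I e (ptr I a) = 1)
    ∨ (sexp I e a = 2 ∧ texp I e a = 1 ∧ sexp I e (ptr I a) = 1 ∧ texp I e (ptr I a) = 2)
    ∨ (ptr I a = a ∧ sexp I e a = 1 ∧ texp I e a = 2) := by
  by_cases hp : ∃ b, I a b
  · have hne : e a ≠ e (ptr I a) := by
      intro h
      have h2 := I_ptr hp
      rw [← einj h] at h2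
      exact hirr a h2
    have hpp : ptr I (ptr I a) = a := ptr_ptr hsym hdeg a
    by_cases hle : e a ≤ e (ptr I a)
    · left
      have hlt : ¬ e (ptr I a) ≤ e (ptr I (ptr I a)) := by rw [hpp]; omega
      exact ⟨if_pos hle, if_pos hle, if_neg hlt, if_neg hlt⟩
    · right; left
      have hlt : e (ptr I a) ≤ e (ptr I (ptr I a)) := by rw [hpp]; omega
      exact ⟨if_neg hle, if_neg hle, if_pos hlt, if_pos hlt⟩
  · right; right
    have h := ptr_unpaired hp
    have : e a ≤ e (ptr I a) := by rw [h]
    exact ⟨h, if_pos this, if_pos this⟩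

lemma sexp_pos (a : Γ) : 1 ≤ sexp I e a := by
  rw [sexp]; split <;> omega

lemma texp_pos (a : Γ) : 1 ≤ texp I e a := by
  rw [texp]; split <;> omega

end Matching

lemma block_split (P : Γ → Prop) : ∀ u : List Γ, ∃ B u₂, u = B ++ u₂ ∧
    (∀ x ∈ B, P x) ∧ (∀ c, u₂.head? = some c → ¬ P c) := by
  intro u
  induction u with
  | nil => exact ⟨[], [], rfl, by simp, by simp⟩
  | cons x u ih =>
    by_cases hx : P x
    · obtain ⟨B, u₂, rfl, hB, hh⟩ := ih
      refine ⟨x :: B, u₂, rfl, ?_, hh⟩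
      intro y hy
      rcases List.mem_cons.mp hy with rfl | hy
      · exact hx
      · exact hB y hy
    · refine ⟨[], x :: u, rfl, by simp, ?_⟩
      intro c hc
      rw [List.head?_cons, Option.some.injEq] at hc
      rw [← hc]
      exact hx

lemma flatMap_repl (f g : Γ → ℕ) (lb : ℕ) : ∀ B : List Γ, (∀ x ∈ B, g x = lb) →
    B.flatMap (fun a => List.replicate (f a) (g a)) = List.replicate ((B.map f).sum) lb := by
  intro B
  induction B with
  | nil => simp
  | cons x B ih =>
    intro hB
    rw [List.flatMap_cons, hB x (List.mem_cons_self),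
      ih fun y hy => hB y (List.mem_cons_of_mem _ hy), List.map_cons, List.sum_cons,
      List.replicate_add]

lemma head_ne (f g : Γ → ℕ) (hf : ∀ a, 1 ≤ f a) (lb : ℕ) (u₂ : List Γ)
    (h : ∀ c, u₂.head? = some c → ¬ g c = lb) :
    (u₂.flatMap (fun a => List.replicate (f a) (g a))).head? ≠ some lb := by
  cases u₂ with
  | nil => simp
  | cons c u =>
    have hg := h c rfl
    obtain ⟨k, hk⟩ : ∃ k, f c = k + 1 := ⟨f c - 1, by have := hf c; omega⟩
    rw [List.flatMap_cons, hk, List.replicate_succ, List.cons_append, List.head?_cons]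
    intro hcon
    exact hg (by simpa using hcon)

lemma canon {a b : Γ} (hIab : a = b ∨ I a b) : ∀ B : List Γ, (∀ x ∈ B, x = a ∨ x = b) →
    ∃ ca cb : ℕ, traceCon I (FreeMonoid.ofList B)
      (FreeMonoid.ofList (List.replicate ca a ++ List.replicate cb b)) ∧
      ∀ f : Γ → ℕ, (B.map f).sum = f a * ca + f b * cb := by
  intro B
  induction B with
  | nil =>
    intro _
    exact ⟨0, 0, by simpa using (traceCon I).refl (FreeMonoid.ofList []), by simp⟩
  | cons x B ih =>
    intro hmem
    obtain ⟨ca, cb, htr, hsum⟩ := ih fun y hy => hmem y (List.mem_cons_of_mem _ hy)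
    by_cases hxa : x = a
    · subst hxa
      refine ⟨ca + 1, cb, ?_, ?_⟩
      · have h1 : List.replicate (ca+1) x ++ List.replicate cb b
            = x :: (List.replicate ca x ++ List.replicate cb b) := by
          rw [List.replicate_succ]; rfl
        rw [h1]
        exact (traceCon I).mul ((traceCon I).refl (FreeMonoid.of x)) htr
      · intro f
        rw [List.map_cons, List.sum_cons, hsum f]; ring
    · have hxb : x = b := (hmem x (List.mem_cons_self)).resolve_left hxa
      subst hxb
      have hab : I a x := by
        rcases hIab with rfl | h
        · exact absurd rfl hxa
        · exact h
      refine ⟨ca, cb + 1, ?_, ?_⟩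
      · have h1 : traceCon I (FreeMonoid.ofList (x :: B))
            (FreeMonoid.ofList ((x :: List.replicate ca a) ++ List.replicate cb x)) :=
          (traceCon I).mul ((traceCon I).refl (FreeMonoid.of x)) htr
        have h2 : traceCon I (FreeMonoid.ofList ((x :: List.replicate ca a) ++ List.replicate cb x))
            (FreeMonoid.ofList ((List.replicate ca a ++ [x]) ++ List.replicate cb x)) := by
          refine (traceCon I).mul ?_ ((traceCon I).refl (FreeMonoid.ofList (List.replicate cb x)))
          exact (traceCon I).symm (trace_move (List.replicate ca a)
            (fun y hy => (List.eq_of_mem_replicate hy) ▸ hab))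
        have h3 : (List.replicate ca a ++ [x]) ++ List.replicate cb x
            = List.replicate ca a ++ List.replicate (cb+1) x := by
          rw [List.append_assoc, List.replicate_succ]; rfl
        rw [h3] at h2
        exact (traceCon I).trans h1 h2
      · intro f
        rw [List.map_cons, List.sum_cons, hsum f]; ring

lemma match_inj (hirr : ∀ a, ¬ I a a) (hsym : ∀ a b, I a b → I b a)
    (hdeg : ∀ a b c : Γ, I a b → I a c → b = c) (einj : Function.Injective e) :
    ∀ (n : ℕ) (u v : List Γ), u.length + v.length ≤ n →
      u.flatMap (fun a => List.replicate (sexp I e a) (lab I e a))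
        = v.flatMap (fun a => List.replicate (sexp I e a) (lab I e a)) →
      u.flatMap (fun a => List.replicate (texp I e a) (lab I e a))
        = v.flatMap (fun a => List.replicate (texp I e a) (lab I e a)) →
      traceCon I (FreeMonoid.ofList u) (FreeMonoid.ofList v) := by
  intro n
  induction n with
  | zero =>
    intro u v hn _ _
    have hu : u = [] := by cases u <;> simp_all
    have hv : v = [] := by cases v <;> simp_all
    subst hu; subst hv
    exact (traceCon I).refl _
  | succ n ih =>
    intro u v hn h1 h2
    have flat_ne : ∀ (w : List Γ) (c : Γ) (w' : List Γ), w = c :: w' →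
        (w.flatMap (fun a => List.replicate (sexp I e a) (lab I e a))) ≠ [] := by
      rintro w c w' rfl
      obtain ⟨k, hk⟩ : ∃ k, sexp I e c = k + 1 := ⟨sexp I e c - 1, by have := sexp_pos (I:=I) (e:=e) c; omega⟩
      rw [List.flatMap_cons, hk, List.replicate_succ]
      simp
    cases hu' : u with
    | nil =>
      subst hu'
      cases hv' : v with
      | nil => exact (traceCon I).refl _
      | cons b v' =>
        exact absurd h1.symm (by subst hv'; exact flat_ne _ b v' rfl)
    | cons a u' =>
      subst hu'
      -- split both u and v into the first block with label lb = lab a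
      obtain ⟨B, u₂, hu, hBmem, hu₂⟩ := block_split (fun x => lab I e x = lab I e a) (a :: u')
      obtain ⟨B', v₂, hv, hB'mem, hv₂⟩ := block_split (fun x => lab I e x = lab I e a) v
      have hBne : B ≠ [] := by
        intro h
        subst h
        simp only [List.nil_append] at hu
        exact hu₂ a (by rw [← hu]; rfl) rfl
      rw [hu, hv, List.flatMap_append, List.flatMap_append,
        flatMap_repl _ _ _ B hBmem, flatMap_repl _ _ _ B' hB'mem] at h1 h2
      obtain ⟨hsum1, htail1⟩ := repl_cancel _ _ _ _ _
        (head_ne _ _ (sexp_pos (I:=I) (e:=e)) _ u₂ hu₂) (head_ne _ _ (sexp_pos (I:=I) (e:=e)) _ v₂ hv₂) h1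
      obtain ⟨hsum2, htail2⟩ := repl_cancel _ _ _ _ _
        (head_ne _ _ (texp_pos (I:=I) (e:=e)) _ u₂ hu₂) (head_ne _ _ (texp_pos (I:=I) (e:=e)) _ v₂ hv₂) h2
      have hmemB : ∀ x ∈ B, x = a ∨ x = ptr I a :=
        fun x hx => lab_eq hsym hdeg einj (hBmem x hx)
      have hmemB' : ∀ x ∈ B', x = a ∨ x = ptr I a :=
        fun x hx => lab_eq hsym hdeg einj (hB'mem x hx)
      obtain ⟨ca, cb, htrB, hsB⟩ := canon (ptr_or a) B hmemB
      obtain ⟨ca', cb', htrB', hsB'⟩ := canon (ptr_or a) B' hmemB'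
      have e1 : sexp I e a * ca + sexp I e (ptr I a) * cb
          = sexp I e a * ca' + sexp I e (ptr I a) * cb' := by
        rw [← hsB (sexp I e), ← hsB' (sexp I e), hsum1]
      have e2 : texp I e a * ca + texp I e (ptr I a) * cb
          = texp I e a * ca' + texp I e (ptr I a) * cb' := by
        rw [← hsB (texp I e), ← hsB' (texp I e), hsum2]
      have hcanon : List.replicate ca a ++ List.replicate cb (ptr I a)
          = List.replicate ca' a ++ List.replicate cb' (ptr I a) := by
        rcases exp_cases hirr hsym hdeg einj a with ⟨q1,q2,q3,q4⟩|⟨q1,q2,q3,q4⟩|⟨hpa,q1,q2⟩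
        · rw [q1, q3] at e1; rw [q2, q4] at e2
          have : ca = ca' ∧ cb = cb' := by omega
          rw [this.1, this.2]
        · rw [q1, q3] at e1; rw [q2, q4] at e2
          have : ca = ca' ∧ cb = cb' := by omega
          rw [this.1, this.2]
        · rw [hpa, ← List.replicate_add, ← List.replicate_add]
          rw [hpa, q1] at e1
          congr 1
          omega
      have hB'ne : B' ≠ [] := by
        intro h
        subst h
        simp only [List.map_nil, List.sum_nil] at hsum1
        obtain ⟨x, B'', rfl⟩ : ∃ x B'', B = x :: B'' := by
          cases B with
          | nil => exact absurd rfl hBne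
          | cons x B'' => exact ⟨x, B'', rfl⟩
        rw [List.map_cons, List.sum_cons] at hsum1
        have := sexp_pos (I:=I) (e:=e) x
        omega
      have hlen : u₂.length + v₂.length ≤ n := by
        have h3 : (a :: u').length = B.length + u₂.length := by rw [hu]; simp
        have h4 : v.length = B'.length + v₂.length := by rw [hv]; simp
        have h5 : 1 ≤ B.length := List.length_pos_iff.mpr hBne
        have h6 : 1 ≤ B'.length := List.length_pos_iff.mpr hB'ne
        omega
      have htail := ih u₂ v₂ hlen htail1 htail2
      rw [hu, hv]
      have t1 : traceCon I (FreeMonoid.ofList (B ++ u₂))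
          (FreeMonoid.ofList ((List.replicate ca a ++ List.replicate cb (ptr I a)) ++ v₂)) :=
        (traceCon I).mul htrB htail
      have t2 : traceCon I
          (FreeMonoid.ofList ((List.replicate ca' a ++ List.replicate cb' (ptr I a)) ++ v₂))
          (FreeMonoid.ofList (B' ++ v₂)) :=
        (traceCon I).mul ((traceCon I).symm htrB') ((traceCon I).refl (FreeMonoid.ofList v₂))
      rw [hcanon] at t1
      exact (traceCon I).trans t1 t2

end Matching

section Bipartite

variable {Γ : Type} {I : Γ → Γ → Prop}

noncomputable def delta (e : Γ → ℕ) (E : Set Γ) (a : Γ) : List ℕ :=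
  if a ∈ E then [] else [e a]

lemma split_first (e : Γ → ℕ) (einj : Function.Injective e) (D : Set Γ) :
    ∀ (v : List Γ) (a : Γ) (L : List ℕ), a ∉ D → v.flatMap (delta e D) = e a :: L →
    ∃ p q, v = p ++ a :: q ∧ (∀ x ∈ p, x ∈ D) ∧ q.flatMap (delta e D) = L := by
  intro v
  induction v with
  | nil => intro a L _ h; simp at h
  | cons b v ih =>
    intro a L ha h
    by_cases hb : b ∈ D
    · rw [List.flatMap_cons] at h
      simp only [delta, if_pos hb, List.nil_append] at h
      obtain ⟨p, q, rfl, hp, hq⟩ := ih a L ha h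
      refine ⟨b :: p, q, rfl, ?_, hq⟩
      intro x hx
      rcases List.mem_cons.mp hx with rfl | hx
      · exact hb
      · exact hp x hx
    · rw [List.flatMap_cons] at h
      simp only [delta, if_neg hb, List.cons_append, List.nil_append, List.cons.injEq] at h
      have hba : b = a := einj h.1
      exact ⟨[], v, by rw [hba]; rfl, by simp, h.2⟩

lemma flatMap_delta_nil (e : Γ → ℕ) (E : Set Γ) (p : List Γ) (hp : ∀ x ∈ p, x ∈ E) :
    p.flatMap (delta e E) = [] := by
  induction p with
  | nil => rfl
  | cons b p ih =>
    rw [List.flatMap_cons, delta, if_pos (hp b (List.mem_cons_self)), List.nil_append]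
    exact ih fun x hx => hp x (List.mem_cons_of_mem _ hx)

lemma bip_inj (e : Γ → ℕ) (einj : Function.Injective e) (C D : Set Γ)
    (hdisj : Disjoint C D)
    (hIff : ∀ a b : Γ, I a b ↔ ((a ∈ C ∧ b ∈ D) ∨ (a ∈ D ∧ b ∈ C))) :
    ∀ (n : ℕ) (u v : List Γ), u.length + v.length ≤ n →
      u.flatMap (delta e D) = v.flatMap (delta e D) →
      u.flatMap (delta e C) = v.flatMap (delta e C) →
      traceCon I (FreeMonoid.ofList u) (FreeMonoid.ofList v) := by
  intro n
  induction n with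
  | zero =>
    intro u v hn h1 h2
    have hu : u = [] := by cases u <;> simp_all
    have hv : v = [] := by cases v <;> simp_all
    subst hu; subst hv
    exact (traceCon I).refl _
  | succ n ih =>
    intro u v hn h1 h2
    have main : ∀ (C' D' : Set Γ) (u v : List Γ) (a : Γ) (u' : List Γ),
        u = a :: u' → a ∉ D' → Disjoint C' D' →
        (∀ a b : Γ, I a b ↔ ((a ∈ C' ∧ b ∈ D') ∨ (a ∈ D' ∧ b ∈ C'))) →
        (∀ u v : List Γ, u.length + v.length ≤ n →
          u.flatMap (delta e D') = v.flatMap (delta e D') →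
          u.flatMap (delta e C') = v.flatMap (delta e C') →
          traceCon I (FreeMonoid.ofList u) (FreeMonoid.ofList v)) →
        u.length + v.length ≤ n + 1 →
        u.flatMap (delta e D') = v.flatMap (delta e D') →
        u.flatMap (delta e C') = v.flatMap (delta e C') →
        traceCon I (FreeMonoid.ofList u) (FreeMonoid.ofList v) := by
      intro C' D' u v a u' hu haD hdisj' hIff' ihn hn h1 h2
      subst hu
      rw [List.flatMap_cons] at h1 h2
      rw [delta, if_neg haD, List.cons_append, List.nil_append] at h1
      obtain ⟨p, q, rfl, hp, hq⟩ := split_first e einj D' v a _ haD h1.symm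
      have hpD : p.flatMap (delta e D') = [] := flatMap_delta_nil e D' p hp
      have hDtail : u'.flatMap (delta e D') = q.flatMap (delta e D') := hq.symm
      by_cases haC : a ∈ C'
      · -- a commutes with all of p; move it to the front of v
        have hC'a : delta e C' a = [] := if_pos haC
        have hCtail : u'.flatMap (delta e C') = (p ++ q).flatMap (delta e C') := by
          rw [hC'a, List.nil_append] at h2
          rw [h2, List.flatMap_append, List.flatMap_cons, hC'a, List.nil_append,
            ← List.flatMap_append]
        have hDtail' : u'.flatMap (delta e D') = (p ++ q).flatMap (delta e D') := by
          rw [List.flatMap_append, hpD, List.nil_append]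
          exact hDtail
        have hlen : u'.length + (p ++ q).length ≤ n := by
          simp only [List.length_cons, List.length_append] at hn ⊢
          omega
        have hrec := ihn u' (p ++ q) hlen hDtail' hCtail
        have hcomm : ∀ x ∈ p, I x a := fun x hx => (hIff' x a).2 (Or.inr ⟨hp x hx, haC⟩)
        have hmove := trace_move (I := I) p hcomm
        have t1 : traceCon I (FreeMonoid.ofList (a :: u'))
            (FreeMonoid.ofList ((a :: p) ++ q)) :=
          (traceCon I).mul ((traceCon I).refl (FreeMonoid.of a)) hrec
        have hl1 : p ++ a :: q = (p ++ [a]) ++ q := by simp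
        rw [hl1]
        exact (traceCon I).trans t1 ((traceCon I).mul ((traceCon I).symm hmove)
          ((traceCon I).refl (FreeMonoid.ofList q)))
      · -- p must be empty
        cases p with
        | cons x p' =>
          exfalso
          have hxD : x ∈ D' := hp x (List.mem_cons_self)
          have hxC : x ∉ C' := Set.disjoint_right.mp hdisj' hxD
          rw [delta, if_neg haC, List.cons_append, List.nil_append, List.cons_append,
            List.flatMap_cons, delta, if_neg hxC, List.cons_append, List.nil_append] at h2
          have : a = x := einj (List.cons.injEq _ _ _ _ ▸ h2).1
          exact haD (this ▸ hxD)
        | nil =>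
          rw [List.nil_append] at hn ⊢
          rw [delta, if_neg haC, List.cons_append, List.nil_append, List.nil_append,
            List.flatMap_cons, delta, if_neg haC, List.cons_append, List.nil_append] at h2
          have hCtail : u'.flatMap (delta e C') = q.flatMap (delta e C') :=
            (List.cons.injEq _ _ _ _ ▸ h2).2
          have hlen : u'.length + q.length ≤ n := by
            simp only [List.length_cons] at hn
            omega
          exact (traceCon I).mul ((traceCon I).refl (FreeMonoid.of a))
            (ihn u' q hlen hDtail hCtail)
    cases hu' : u with
    | nil =>
      subst hu'
      cases hv' : v with
      | nil => exact (traceCon I).refl _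
      | cons b v' =>
        exfalso
        subst hv'
        rw [List.flatMap_cons] at h1 h2
        have hbD : b ∈ D := by
          by_contra hb
          rw [delta, if_neg hb, List.cons_append, List.nil_append] at h1
          simp at h1
        have hbC : b ∈ C := by
          by_contra hb
          rw [delta, if_neg hb, List.cons_append, List.nil_append] at h2
          simp at h2
        exact Set.disjoint_left.mp hdisj hbC hbD
    | cons a u' =>
      subst hu'
      by_cases haD : a ∈ D
      · have haC : a ∉ C := Set.disjoint_right.mp hdisj haD
        exact main D C _ v a u' rfl haC hdisj.symm
          (fun a b => (hIff a b).trans or_comm)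
          (fun u v h hC hD => ih u v h hD hC) hn h2 h1
      · exact main C D _ v a u' rfl haD hdisj hIff ih hn h1 h2

end Bipartite

/-- If either every vertex of `(Γ, I)` has degree at most 1, or `(Γ, I)` has exactly
one nontrivial connected component which is complete bipartite, then the trace monoid
`M(Γ, I)` embeds into `{a,b}* × {c,d}*` (two free monoids over two-letter alphabets,
modelled by `Bool`). -/
theorem stmt17 (Γ : Type) [Countable Γ] (I : Γ → Γ → Prop)
    (hirr : ∀ a, ¬ I a a) (hsym : ∀ a b, I a b → I b a)
    (hcond : (∀ a b c : Γ, I a b → I a c → b = c) ∨ OneCompleteBipartiteComponent I) :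
    ∃ f : TraceMonoid I →* FreeMonoid Bool × FreeMonoid Bool,
      Function.Injective f := by
  classical
  obtain ⟨e, einj⟩ := Countable.exists_injective_nat Γ
  rcases hcond with hdeg | ⟨C₁, C₂, hdisj, _, _, hIff⟩
  · apply assemble (fun a => List.replicate (sexp I e a) (lab I e a))
      (fun a => List.replicate (texp I e a) (lab I e a))
    · intro a b hab
      have hb : ptr I a = b := ptr_eq hdeg hab
      have hlab : lab I e b = lab I e a := by rw [← hb]; exact lab_ptr hsym hdeg a
      constructor <;>
        rw [hlab, ← List.replicate_add, ← List.replicate_add, Nat.add_comm]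
    · intro u v h1 h2
      exact match_inj hirr hsym hdeg einj (u.length + v.length) u v le_rfl h1 h2
  · apply assemble (delta e C₂) (delta e C₁)
    · intro a b hab
      rcases (hIff a b).1 hab with ⟨ha, hb⟩ | ⟨ha, hb⟩
      · have h1 : delta e C₂ b = [] := if_pos hb
        have h2 : delta e C₁ a = [] := if_pos ha
        rw [h1, h2]; simp
      · have h1 : delta e C₂ a = [] := if_pos ha
        have h2 : delta e C₁ b = [] := if_pos hb
        rw [h1, h2]; simp
    · intro u v h1 h2
      exact bip_inj e einj C₁ C₂ hdisj hIff (u.length + v.length) u v le_rfl h1 h2
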